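/- Let σ : S² → S² be the involution σ(x,y,z) = (−x,−y,z) on the unit sphere S² ⊂ ℝ³, and let A = {(x,y,z) ∈ S² : z = 0} be the equator. There is no continuous map H : S² × [0,1] → S² such that H(σ(v),t) = σ(H(v,t)) for all v ∈ S² and t ∈ [0,1], H(v,0) = v for all v ∈ S², and {v ∈ S² : H(v,1) = v} = A. In other words, the equator cannot be realized as the fixed point set of any map ℤ₂-homotopic to the identity. -/

import Mathlib

/-- The unit 2-sphere in `ℝ³`. -/
def Sph2 : Set (ℝ × ℝ × ℝ) := {v | v.1 ^ 2 + v.2.1 ^ 2 + v.2.2 ^ 2 = 1}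

/-- The involution `σ(x,y,z) = (-x,-y,z)` on the 2-sphere. -/
def sigmaS2 (v : Sph2) : Sph2 :=
  ⟨(-(v : ℝ × ℝ × ℝ).1, -(v : ℝ × ℝ × ℝ).2.1, (v : ℝ × ℝ × ℝ).2.2), by
    have h := v.2
    simp only [Sph2, Set.mem_setOf_eq] at h ⊢
    nlinarith [h]⟩

/-- The equator `A = {(x,y,z) ∈ S² : z = 0}` cannot be realized as the fixed point
set of a map `ℤ₂`-homotopic to the identity of `S²`. -/
theorem no_equivariant_homotopy_realizing_equator :
    ¬ ∃ H : Sph2 × unitInterval → Sph2,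
        Continuous H ∧
        (∀ (v : Sph2) (t : unitInterval), H (sigmaS2 v, t) = sigmaS2 (H (v, t))) ∧
        (∀ v : Sph2, H (v, 0) = v) ∧
        {v : Sph2 | H (v, 1) = v} = {v : Sph2 | (v : ℝ × ℝ × ℝ).2.2 = 0} := by
  rintro ⟨H, hc, hequiv, h0, hfix⟩
  -- the north pole
  set N : Sph2 := ⟨(0, 0, 1), by simp [Sph2]⟩ with hN
  have hsN : sigmaS2 N = N := by
    apply Subtype.ext
    simp [sigmaS2, hN]
  -- at all times, H(N,t) has first two coordinates zero
  have hxy : ∀ t : unitInterval,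
      ((H (N, t)) : ℝ × ℝ × ℝ).1 = 0 ∧ ((H (N, t)) : ℝ × ℝ × ℝ).2.1 = 0 := by
    intro t
    have h := hequiv N t
    rw [hsN] at h
    have h' := congrArg (fun w : Sph2 => (w : ℝ × ℝ × ℝ)) h
    simp only [sigmaS2] at h'
    have h1 := congrArg Prod.fst h'
    have h2 := congrArg (fun w : ℝ × ℝ × ℝ => w.2.1) h'
    simp only at h1 h2
    constructor <;> linarith
  -- z-coordinate of H(N,t)
  set f : unitInterval → ℝ := fun t => ((H (N, t)) : ℝ × ℝ × ℝ).2.2 with hf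
  have hfc : Continuous f := by
    apply Continuous.comp continuous_snd
    apply Continuous.comp continuous_snd
    exact (continuous_subtype_val.comp hc).comp
      (Continuous.prodMk_right N)
  have hsq : ∀ t, f t ^ 2 = 1 := by
    intro t
    have hmem := (H (N, t)).2
    simp only [Sph2, Set.mem_setOf_eq] at hmem
    have := hxy t
    show ((H (N, t)) : ℝ × ℝ × ℝ).2.2 ^ 2 = 1
    have hmem' : ((H (N, t)) : ℝ × ℝ × ℝ).1 ^ 2 + ((H (N, t)) : ℝ × ℝ × ℝ).2.1 ^ 2 +
        ((H (N, t)) : ℝ × ℝ × ℝ).2.2 ^ 2 = 1 := hmem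
    rw [this.1, this.2] at hmem'
    nlinarith [this.1, this.2]
  have hf0 : f 0 = 1 := by
    simp only [hf]
    rw [h0 N]
  have hf1 : f 1 = 1 := by
    by_contra hne
    have : f 1 = -1 := by
      have hs := hsq 1
      have hm : (f 1 - 1) * (f 1 + 1) = 0 := by ring_nf; nlinarith
      rcases mul_eq_zero.mp hm with h | h
      · exact absurd (by linarith) hne
      · linarith
    -- intermediate value: some t with f t = 0
    have h0mem : (0 : ℝ) ∈ Set.Icc (f 1) (f 0) := by
      rw [hf0, this]; norm_num
    have := intermediate_value_univ (1 : unitInterval) 0 hfc h0mem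
    obtain ⟨t, ht⟩ := this
    have := hsq t
    rw [ht] at this
    norm_num at this
  -- hence H(N,1) = N
  have hHN : H (N, 1) = N := by
    apply Subtype.ext
    have hx := (hxy 1).1
    have hy := (hxy 1).2
    have hz : ((H (N, 1)) : ℝ × ℝ × ℝ).2.2 = 1 := hf1
    have : ((H (N, 1)) : ℝ × ℝ × ℝ) =
        (((H (N, 1)) : ℝ × ℝ × ℝ).1, ((H (N, 1)) : ℝ × ℝ × ℝ).2.1,
          ((H (N, 1)) : ℝ × ℝ × ℝ).2.2) := rfl
    rw [this, hx, hy, hz]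
  have : N ∈ {v : Sph2 | H (v, 1) = v} := hHN
  rw [hfix] at this
  simp only [Set.mem_setOf_eq, hN] at this
  norm_num at this
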